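/- For any even positive integer n ≥ 4 and any natural number λ, the number of orbits of the dihedral group D_n acting on the set of proper λ-colorings of the cycle Γ_n equals (1/(2n)) ∑_{d | n} φ(n/d)(λ−1)^d + (1/4) λ (λ−1)^{n/2}. -/

import Mathlib

open Finset Fin

namespace Orbital11

variable (l : ℕ)

/-- number of proper colorings of the path with `k+1` vertices -/
lemma card_path (k : ℕ) :
    Fintype.card {g : Fin (k+1) → Fin l // ∀ i : Fin k, g i.castSucc ≠ g i.succ}
      = l * (l-1)^k := by
  induction k with
  | zero =>
      rw [Fintype.card_congr ((Equiv.subtypeUnivEquiv (fun g => fun i => i.elim0)).trans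
        (Equiv.funUnique (Fin 1) (Fin l)))]
      simp
  | succ k ih =>
      have E : {g : Fin (k+2) → Fin l // ∀ i : Fin (k+1), g i.castSucc ≠ g i.succ}
          ≃ {p : (Fin (k+1) → Fin l) × Fin l //
              (∀ i : Fin k, p.1 i.castSucc ≠ p.1 i.succ) ∧ p.2 ≠ p.1 (Fin.last k)} :=
        { toFun := fun g => ⟨(Fin.init g.1, g.1 (Fin.last (k+1))), by
            constructor
            · intro i
              have h := g.2 i.castSucc
              simpa only [Fin.init, Fin.succ_castSucc] using h
            · have h := g.2 (Fin.last k)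
              simp only [Fin.succ_last] at h
              simpa [Fin.init] using (Ne.symm h)⟩
          invFun := fun p => ⟨Fin.snoc p.1.1 p.1.2, by
            intro i
            refine Fin.lastCases ?_ ?_ i
            · rw [Fin.succ_last, Fin.snoc_last, Fin.snoc_castSucc]
              exact (p.2.2).symm
            · intro j
              rw [Fin.succ_castSucc, Fin.snoc_castSucc, Fin.snoc_castSucc]
              exact p.2.1 j⟩
          left_inv := fun g => Subtype.ext (Fin.snoc_init_self g.1)
          right_inv := fun p => Subtype.ext (by
            ext : 1
            · exact funext fun i => by simp [Fin.init_snoc]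
            · simp) }
      rw [Fintype.card_congr E]
      rw [Fintype.card_congr (Equiv.subtypeProdEquivSigmaSubtype
        (fun (a : Fin (k+1) → Fin l) (b : Fin l) =>
          (∀ i : Fin k, a i.castSucc ≠ a i.succ) ∧ b ≠ a (Fin.last k)))]
      rw [Fintype.card_sigma]
      have hfib : ∀ a : Fin (k+1) → Fin l,
          Fintype.card {b : Fin l // (∀ i : Fin k, a i.castSucc ≠ a i.succ) ∧ b ≠ a (Fin.last k)}
          = if (∀ i : Fin k, a i.castSucc ≠ a i.succ) then l - 1 else 0 := by
        intro a
        by_cases h : ∀ i : Fin k, a i.castSucc ≠ a i.succ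
        · rw [if_pos h]
          rw [Fintype.card_congr (Equiv.subtypeEquivRight (fun b => and_iff_right h))]
          rw [Fintype.card_subtype_compl, Fintype.card_subtype_eq, Fintype.card_fin]
        · rw [if_neg h]
          rw [Fintype.card_eq_zero_iff]
          exact ⟨fun b => h b.2.1⟩
      simp only [hfib]
      rw [Finset.sum_ite, Finset.sum_const, Finset.sum_const]
      rw [← Fintype.card_subtype, ih]
      simp only [smul_eq_mul, mul_zero, add_zero, pow_succ]
      ring

lemma cyc_iff (k : ℕ) (g : Fin (k+2) → Fin l) :
    (∀ i, g i ≠ g (i+1)) ↔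
      ((∀ i : Fin (k+1), g i.castSucc ≠ g i.succ) ∧ g 0 ≠ g (Fin.last (k+1))) := by
  constructor
  · intro h
    refine ⟨fun i => ?_, ?_⟩
    · have := h i.castSucc
      rwa [Fin.coeSucc_eq_succ] at this
    · have := h (Fin.last (k+1))
      rw [Fin.last_add_one] at this
      exact this.symm
  · rintro ⟨hP, h0⟩ i
    refine Fin.lastCases ?_ ?_ i
    · rw [Fin.last_add_one]
      exact h0.symm
    · intro j
      rw [Fin.coeSucc_eq_succ]
      exact hP j

def cyc_succ_equiv (k : ℕ) :
    {g : Fin (k+2) → Fin l // (∀ i : Fin (k+1), g i.castSucc ≠ g i.succ) ∧ g 0 = g (Fin.last (k+1))}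
      ≃ {h : Fin (k+1) → Fin l // ∀ i, h i ≠ h (i+1)} :=
  { toFun := fun g => ⟨fun i => g.1 i.castSucc, by
      intro i
      dsimp only
      refine Fin.lastCases ?_ ?_ i
      · rw [Fin.last_add_one, Fin.castSucc_zero, g.2.2]
        simpa [Fin.succ_last] using g.2.1 (Fin.last k)
      · intro j
        rw [Fin.coeSucc_eq_succ, ← Fin.succ_castSucc]
        exact g.2.1 j.castSucc⟩
    invFun := fun h => ⟨Fin.snoc h.1 (h.1 0), by
      constructor
      · intro i
        refine Fin.lastCases ?_ ?_ i
        · rw [Fin.succ_last, Fin.snoc_last, Fin.snoc_castSucc]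
          have := h.2 (Fin.last k)
          rw [Fin.last_add_one] at this
          exact this
        · intro j
          rw [Fin.succ_castSucc, Fin.snoc_castSucc, Fin.snoc_castSucc]
          have := h.2 j.castSucc
          rwa [Fin.coeSucc_eq_succ] at this
      · rw [Fin.snoc_last]
        exact Fin.snoc_castSucc (α := fun _ => Fin l) (p := h.1) (x := h.1 0) (i := 0)⟩
    left_inv := fun g => Subtype.ext (by
      funext i
      dsimp only
      refine Fin.lastCases ?_ ?_ i
      · rw [Fin.snoc_last, Fin.castSucc_zero, g.2.2]
      · intro j; rw [Fin.snoc_castSucc])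
    right_inv := fun h => Subtype.ext (by
      funext i
      dsimp only
      rw [Fin.snoc_castSucc]) }

lemma path_eq_cyc_add (k : ℕ) :
    Fintype.card {g : Fin (k+2) → Fin l // ∀ i : Fin (k+1), g i.castSucc ≠ g i.succ}
      = Fintype.card {g : Fin (k+2) → Fin l // ∀ i, g i ≠ g (i+1)}
        + Fintype.card {g : Fin (k+1) → Fin l // ∀ i, g i ≠ g (i+1)} := by
  classical
  have h1 : Fintype.card {g : Fin (k+2) → Fin l // ∀ i, g i ≠ g (i+1)}
      = Fintype.card {g : Fin (k+2) → Fin l //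
          (∀ i : Fin (k+1), g i.castSucc ≠ g i.succ) ∧ g 0 ≠ g (Fin.last (k+1))} :=
    Fintype.card_congr (Equiv.subtypeEquivRight (fun g => cyc_iff l k g))
  have h2 : Fintype.card {g : Fin (k+1) → Fin l // ∀ i, g i ≠ g (i+1)}
      = Fintype.card {g : Fin (k+2) → Fin l //
          (∀ i : Fin (k+1), g i.castSucc ≠ g i.succ) ∧ g 0 = g (Fin.last (k+1))} :=
    (Fintype.card_congr (cyc_succ_equiv l k)).symm
  rw [h1, h2, Fintype.card_subtype, Fintype.card_subtype, Fintype.card_subtype]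
  rw [← Finset.card_filter_add_card_filter_not
    (s := univ.filter (fun g : Fin (k+2) → Fin l => ∀ i : Fin (k+1), g i.castSucc ≠ g i.succ))
    (p := fun g => g 0 ≠ g (Fin.last (k+1)))]
  rw [Finset.filter_filter, Finset.filter_filter]
  congr 2
  ext g
  simp [not_not]

lemma cast_path_card (k : ℕ) : ((l * (l-1)^k : ℕ) : ℚ) = (l : ℚ) * ((l:ℚ)-1)^k := by
  match l with
  | 0 => simp
  | (s+1) => push_cast [Nat.succ_sub_one]; ring

lemma cyc_card_q (k : ℕ) :
    (Fintype.card {g : Fin (k+1) → Fin l // ∀ i, g i ≠ g (i+1)} : ℚ)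
      = ((l:ℚ)-1)^(k+1) + (-1)^(k+1) * ((l:ℚ)-1) := by
  induction k with
  | zero =>
      have : Fintype.card {g : Fin 1 → Fin l // ∀ i, g i ≠ g (i+1)} = 0 := by
        rw [Fintype.card_eq_zero_iff]
        exact ⟨fun g => g.2 0 (congrArg g.1 (Subsingleton.elim _ _))⟩
      rw [this]; push_cast; ring
  | succ k ih =>
      have hrec := path_eq_cyc_add l k
      rw [card_path] at hrec
      have : (Fintype.card {g : Fin (k+2) → Fin l // ∀ i, g i ≠ g (i+1)} : ℚ)
          = ((l * (l-1)^(k+1) : ℕ) : ℚ)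
            - (Fintype.card {g : Fin (k+1) → Fin l // ∀ i, g i ≠ g (i+1)} : ℚ) := by
        rw [hrec]; push_cast; ring
      rw [this, cast_path_card, ih]
      ring

lemma card_path' (k : ℕ) :
    ((Fintype.card {g : Fin (k+1) → Fin l // ∀ i : Fin k, g i.castSucc ≠ g i.succ} : ℕ) : ℚ)
      = (l : ℚ) * ((l:ℚ)-1)^k := by
  rw [card_path, cast_path_card]

def zmodFinEquiv (d : ℕ) [NeZero d] : Fin d ≃ ZMod d where
  toFun i := (i.1 : ZMod d)
  invFun x := ⟨x.val, x.val_lt⟩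
  left_inv i := Fin.ext (by simp [ZMod.val_natCast_of_lt i.isLt])
  right_inv x := ZMod.natCast_rightInverse x

lemma zmodFinEquiv_succ (d : ℕ) [NeZero d] (i : Fin d) :
    zmodFinEquiv d (i + 1) = zmodFinEquiv d i + 1 := by
  show (((i + 1 : Fin d).1 : ℕ) : ZMod d) = _
  rw [Fin.val_add, ZMod.natCast_mod]
  push_cast
  congr 1
  show (((1 : Fin d).1 : ℕ) : ZMod d) = 1
  rw [Fin.val_one', ZMod.natCast_mod, Nat.cast_one]

def properTransfer (l d : ℕ) [NeZero d] :
    {f : ZMod d → Fin l // ∀ x, f x ≠ f (x + 1)}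
      ≃ {g : Fin d → Fin l // ∀ i, g i ≠ g (i + 1)} where
  toFun f := ⟨fun i => f.1 (zmodFinEquiv d i), fun i => by
    dsimp only; rw [zmodFinEquiv_succ]; exact f.2 (zmodFinEquiv d i)⟩
  invFun g := ⟨fun x => g.1 ((zmodFinEquiv d).symm x), fun x => by
    obtain ⟨i, rfl⟩ : ∃ i, zmodFinEquiv d i = x := ⟨(zmodFinEquiv d).symm x, Equiv.apply_symm_apply _ x⟩
    dsimp only
    rw [← zmodFinEquiv_succ, Equiv.symm_apply_apply, Equiv.symm_apply_apply]
    exact g.2 i⟩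
  left_inv f := Subtype.ext (funext fun x => by simp)
  right_inv g := Subtype.ext (funext fun i => by simp)

variable {n l : ℕ}

abbrev Col (n l : ℕ) := {f : ZMod n → Fin l // ∀ x : ZMod n, f x ≠ f (x + 1)}

instance : SMul (DihedralGroup n) (Col n l) where
  smul g f := match g with
    | .r m => ⟨fun v => f.1 (v + m), fun v => by
        have h := f.2 (v + m)
        rwa [show v + m + 1 = v + 1 + m by ring] at h⟩
    | .sr m => ⟨fun v => f.1 (m - v), fun v => by
        have h := f.2 (m - (v + 1))
        rw [show m - (v + 1) + 1 = m - v by ring] at h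
        exact h.symm⟩

lemma r_smul (m : ZMod n) (f : Col n l) (v : ZMod n) :
    ((DihedralGroup.r m • f : Col n l) : ZMod n → Fin l) v = f.1 (v + m) := rfl

lemma sr_smul (m : ZMod n) (f : Col n l) (v : ZMod n) :
    ((DihedralGroup.sr m • f : Col n l) : ZMod n → Fin l) v = f.1 (m - v) := rfl

instance : MulAction (DihedralGroup n) (Col n l) where
  one_smul f := Subtype.ext (funext fun v => by
    show f.1 (v + 0) = f.1 v
    rw [add_zero])
  mul_smul g h f := by
    rcases g with m | m <;> rcases h with m' | m' <;>
      refine Subtype.ext (funext fun v => ?_) <;>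
      simp only [DihedralGroup.r_mul_r, DihedralGroup.r_mul_sr, DihedralGroup.sr_mul_r,
        DihedralGroup.sr_mul_sr, r_smul, sr_smul] <;> congr 1 <;> ring

lemma orbitRel_iff (f g : Col n l) :
    (MulAction.orbitRel (DihedralGroup n) (Col n l)).r f g ↔
      (∃ m : ZMod n, (∀ v : ZMod n, g.1 v = f.1 (v + m)) ∨
          (∀ v : ZMod n, g.1 v = f.1 (m - v))) := by
  rw [MulAction.orbitRel_apply, MulAction.mem_orbit_iff]
  constructor
  · rintro ⟨(m | m), rfl⟩
    · refine ⟨-m, Or.inl fun v => ?_⟩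
      rw [r_smul]; congr 1; ring
    · refine ⟨m, Or.inr fun v => ?_⟩
      rw [sr_smul]; congr 1; ring
  · rintro ⟨m, h | h⟩
    · refine ⟨DihedralGroup.r (-m), Subtype.ext (funext fun v => ?_)⟩
      rw [r_smul, h (v + -m), show v + -m + m = v by ring]
    · refine ⟨DihedralGroup.sr m, Subtype.ext (funext fun v => ?_)⟩
      rw [sr_smul, h (m - v), show m - (m - v) = v by ring]

section rot
variable [NeZero n] (m : ZMod n)

lemma shift_invariant (F : ZMod n → Fin l) (hf : ∀ v, F (v + m) = F v) :
    ∀ (c : ZMod n) (v : ZMod n), F (v + c * m) = F v := by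
  have h1 : ∀ (k : ℕ) (v : ZMod n), F (v + k • m) = F v := by
    intro k
    induction k with
    | zero => intro v; simp
    | succ k ih =>
        intro v
        rw [succ_nsmul, ← add_assoc]
        rw [show v + k • m + m = (v + k • m) + m from rfl, hf, ih]
  intro c v
  have : c * m = (c.val : ℕ) • m := by
    rw [nsmul_eq_mul]
    congr 1
    exact (ZMod.natCast_rightInverse c).symm
  rw [this]
  exact h1 c.val v

lemma gcd_as_mul : ∃ a : ZMod n, ((Nat.gcd (ZMod.val m) n : ℕ) : ZMod n) = a * m := by
  have hb := Nat.gcd_eq_gcd_ab (ZMod.val m) n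
  refine ⟨(Nat.gcdA (ZMod.val m) n : ZMod n), ?_⟩
  have := congrArg (fun z : ℤ => (z : ZMod n)) hb
  push_cast at this
  rw [ZMod.natCast_self, zero_mul, add_zero, ZMod.natCast_rightInverse m] at this
  rw [this, mul_comm]

lemma fixed_const_on_fibers (F : ZMod n → Fin l) (hf : ∀ v, F (v + m) = F v)
    (v w : ZMod n)
    (h : ZMod.castHom (Nat.gcd_dvd_right (ZMod.val m) n) (ZMod (Nat.gcd (ZMod.val m) n)) v
       = ZMod.castHom (Nat.gcd_dvd_right (ZMod.val m) n) (ZMod (Nat.gcd (ZMod.val m) n)) w) :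
    F v = F w := by
  set d := Nat.gcd (ZMod.val m) n with hd
  set π := ZMod.castHom (Nat.gcd_dvd_right (ZMod.val m) n) (ZMod d) with hπ
  have h0 : π (v - w) = 0 := by rw [map_sub, h, sub_self]
  have h0' : ((ZMod.val (v - w) : ℕ) : ZMod d) = 0 := by
    rwa [ZMod.castHom_apply, ← ZMod.natCast_val] at h0
  obtain ⟨t, ht⟩ := (ZMod.natCast_eq_zero_iff _ _).mp h0'
  obtain ⟨a, ha⟩ := gcd_as_mul (n := n) m
  have hvw : v = w + ((a * (t : ZMod n)) * m) := by
    have h2 : v - w = ((ZMod.val (v - w) : ℕ) : ZMod n) := (ZMod.natCast_rightInverse _).symm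
    rw [ht] at h2
    push_cast at h2
    rw [ha] at h2
    have : v - w = (a * (t : ZMod n)) * m := by rw [h2]; ring
    linear_combination this
  rw [hvw]
  exact shift_invariant m F hf _ w

lemma card_fixed_r :
    Nat.card (MulAction.fixedBy (Col n l) (DihedralGroup.r m))
      = Nat.card {f : ZMod (Nat.gcd (ZMod.val m) n) → Fin l // ∀ x, f x ≠ f (x + 1)} := by
  set d := Nat.gcd (ZMod.val m) n with hd
  haveI : NeZero d := ⟨Nat.gcd_ne_zero_right (NeZero.ne n)⟩
  set π := ZMod.castHom (Nat.gcd_dvd_right (ZMod.val m) n) (ZMod d) with hπ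
  have hπrep : ∀ y : ZMod d, π ((ZMod.val y : ℕ) : ZMod n) = y := by
    intro y
    rw [map_natCast]
    exact ZMod.natCast_rightInverse y
  have hπm : π m = 0 := by
    rw [ZMod.castHom_apply, ← ZMod.natCast_val]
    exact (ZMod.natCast_eq_zero_iff _ _).mpr (Nat.gcd_dvd_left _ _)
  have hfix : ∀ f : Col n l, DihedralGroup.r m • f = f ↔ ∀ v, f.1 (v + m) = f.1 v := by
    intro f
    constructor
    · intro h v
      conv_rhs => rw [← h]
      rfl
    · intro h
      exact Subtype.ext (funext fun v => h v)
  apply Nat.card_congr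
  refine
    { toFun := fun f => ⟨fun x => f.1.1 ((ZMod.val x : ℕ) : ZMod n), ?_⟩
      invFun := fun g => ⟨⟨fun v => g.1 (π v), ?_⟩, ?_⟩
      left_inv := ?_
      right_inv := ?_ }
  · intro x
    have hf := (hfix f.1).mp f.2
    have key : f.1.1 ((ZMod.val (x+1) : ℕ) : ZMod n)
        = f.1.1 (((ZMod.val x : ℕ) : ZMod n) + 1) := by
      apply fixed_const_on_fibers m _ hf
      rw [hπrep, map_add, map_one, hπrep]
    dsimp only
    rw [key]
    exact fun hcon => f.1.2 _ hcon
  · intro v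
    dsimp only
    rw [map_add, map_one]
    exact g.2 (π v)
  · apply (hfix _).mpr
    intro v
    dsimp only
    rw [map_add, hπm, add_zero]
  · intro f
    apply Subtype.ext
    apply Subtype.ext
    funext v
    dsimp only
    apply fixed_const_on_fibers m _ ((hfix f.1).mp f.2)
    rw [hπrep]
  · intro g
    apply Subtype.ext
    funext x
    dsimp only
    rw [hπrep]

end rot

section refl

def idxF (n H : ℕ) [NeZero n] (hH : n = H + H) (u : ZMod n) : Fin (H + 1) :=
  ⟨min (ZMod.val u) (n - ZMod.val u), by have := u.val_lt; omega⟩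

lemma idxF_val (n H : ℕ) [NeZero n] (hH : n = H + H) (u : ZMod n) :
    (idxF n H hH u).val = min (ZMod.val u) (n - ZMod.val u) := rfl

lemma idxF_neg (n H : ℕ) [NeZero n] (hH : n = H + H) (u : ZMod n) :
    idxF n H hH (-u) = idxF n H hH u := by
  by_cases hu : u = 0
  · rw [hu, neg_zero]
  · have h1 : ZMod.val u ≠ 0 := fun h => hu (by rwa [ZMod.val_eq_zero] at h)
    have h2 := u.val_lt
    apply Fin.ext
    rw [idxF_val, idxF_val, ZMod.neg_val, if_neg hu]
    omega

variable [NeZero n]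

lemma fixed_sr_iff (m : ZMod n) (f : Col n l) :
    DihedralGroup.sr m • f = f ↔ ∀ v, f.1 (m - v) = f.1 v := by
  constructor
  · intro h v
    conv_rhs => rw [← h]
    rfl
  · intro h
    exact Subtype.ext (funext fun v => h v)

lemma card_fixed_sr_odd (m : ZMod n) (hm : ¬ Even (ZMod.val m)) :
    Nat.card (MulAction.fixedBy (Col n l) (DihedralGroup.sr m)) = 0 := by
  rw [Nat.card_eq_zero]
  left
  constructor
  rintro ⟨f, hf⟩
  obtain ⟨t, ht⟩ := Nat.not_even_iff_odd.mp hm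
  have hsym := (fixed_sr_iff m f).mp hf
  have hmv : m = ((2 * t + 1 : ℕ) : ZMod n) := by
    rw [← ht]
    exact (ZMod.natCast_rightInverse m).symm
  have hdiff : m - (t : ZMod n) = (t : ZMod n) + 1 := by
    rw [hmv]; push_cast; ring
  exact f.2 (t : ZMod n) (by rw [← hdiff]; exact (hsym ((t : ℕ) : ZMod n)).symm)

lemma card_fixed_sr_even (hn4 : 4 ≤ n) (hev : Even n) (m : ZMod n) (hm : Even (ZMod.val m)) :
    Nat.card (MulAction.fixedBy (Col n l) (DihedralGroup.sr m))
      = Fintype.card {g : Fin (n/2+1) → Fin l // ∀ i : Fin (n/2), g i.castSucc ≠ g i.succ} := by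
  obtain ⟨H, hH⟩ := hev
  obtain ⟨k, hk⟩ := hm
  haveI : Fact (1 < n) := ⟨by omega⟩
  have hn2 : n / 2 = H := by omega
  rw [hn2]
  set K : ZMod n := (k : ZMod n) with hK
  have hmK : m = K + K := by
    have h1 : ((ZMod.val m : ℕ) : ZMod n) = m := ZMod.natCast_rightInverse m
    rw [hk] at h1
    push_cast at h1
    exact h1.symm
  have hone : (1 : ZMod n).val = 1 := ZMod.val_one n
  have hadd1 : ∀ u : ZMod n, ZMod.val (u + 1) = (ZMod.val u + 1) % n := fun u => by
    rw [ZMod.val_add, hone]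
  rw [← Nat.card_eq_fintype_card]
  apply Nat.card_congr
  refine
    { toFun := fun f => ⟨fun i => f.1.1 (K + ((i : ℕ) : ZMod n)), ?_⟩
      invFun := fun g => ⟨⟨fun v => g.1 (idxF n H hH (v - K)), ?_⟩, ?_⟩
      left_inv := ?_
      right_inv := ?_ }
  · intro i
    dsimp only
    simp only [Fin.coe_castSucc, Fin.val_succ]
    rw [show ((i.1 + 1 : ℕ) : ZMod n) = ((i.1 : ℕ) : ZMod n) + 1 by push_cast; ring]
    rw [← add_assoc]
    exact f.1.2 _
  · intro v
    dsimp only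
    have e0 : v + 1 - K = (v - K) + 1 := by ring
    rw [e0]
    set u := v - K with hu
    have htlt : ZMod.val u < n := u.val_lt
    have P := g.2
    by_cases c1 : ZMod.val u < H
    · have hu1 : ZMod.val (u + 1) = ZMod.val u + 1 := by
        rw [hadd1]; exact Nat.mod_eq_of_lt (by omega)
      have e1 : idxF n H hH u = Fin.castSucc ⟨ZMod.val u, by omega⟩ := by
        apply Fin.ext
        simp only [idxF_val, Fin.coe_castSucc]
        omega
      have e2 : idxF n H hH (u+1) = Fin.succ ⟨ZMod.val u, by omega⟩ := by
        apply Fin.ext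
        simp only [idxF_val, Fin.val_succ, hu1]
        omega
      rw [e1, e2]; exact P _
    · by_cases c2 : ZMod.val u = H
      · have hu1 : ZMod.val (u + 1) = ZMod.val u + 1 := by
          rw [hadd1]; exact Nat.mod_eq_of_lt (by omega)
        have e1 : idxF n H hH u = Fin.succ ⟨H - 1, by omega⟩ := by
          apply Fin.ext
          simp only [idxF_val, Fin.val_succ]
          omega
        have e2 : idxF n H hH (u+1) = Fin.castSucc ⟨H - 1, by omega⟩ := by
          apply Fin.ext
          simp only [idxF_val, Fin.coe_castSucc, hu1]
          omega
        rw [e1, e2]; exact (P _).symm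
      · by_cases c3 : ZMod.val u < n - 1
        · have hu1 : ZMod.val (u + 1) = ZMod.val u + 1 := by
            rw [hadd1]; exact Nat.mod_eq_of_lt (by omega)
          have e1 : idxF n H hH u = Fin.succ ⟨n - ZMod.val u - 1, by omega⟩ := by
            apply Fin.ext
            simp only [idxF_val, Fin.val_succ]
            omega
          have e2 : idxF n H hH (u+1) = Fin.castSucc ⟨n - ZMod.val u - 1, by omega⟩ := by
            apply Fin.ext
            simp only [idxF_val, Fin.coe_castSucc, hu1]
            omega
          rw [e1, e2]; exact (P _).symm
        · have hu1 : ZMod.val (u + 1) = 0 := by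
            rw [hadd1]
            have h3 : ZMod.val u + 1 = n := by omega
            rw [h3, Nat.mod_self]
          have e1 : idxF n H hH u = Fin.succ ⟨0, by omega⟩ := by
            apply Fin.ext
            simp only [idxF_val, Fin.val_succ]
            omega
          have e2 : idxF n H hH (u+1) = Fin.castSucc ⟨0, by omega⟩ := by
            apply Fin.ext
            simp only [idxF_val, Fin.coe_castSucc, hu1]
            omega
          rw [e1, e2]; exact (P _).symm
  · apply (fixed_sr_iff m _).mpr
    intro v
    dsimp only
    have e : m - v - K = -(v - K) := by rw [hmK]; ring
    rw [e, idxF_neg]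
  · intro f
    have hsym := (fixed_sr_iff m f.1).mp f.2
    apply Subtype.ext
    apply Subtype.ext
    funext v
    dsimp only
    set u := v - K with hu
    have htlt : ZMod.val u < n := u.val_lt
    have hcu : ((ZMod.val u : ℕ) : ZMod n) = u := ZMod.natCast_rightInverse u
    by_cases c : ZMod.val u ≤ H
    · have e1 : idxF n H hH u = ⟨ZMod.val u, by omega⟩ := by
        apply Fin.ext
        simp only [idxF_val]
        omega
      rw [e1]
      dsimp only
      rw [hcu, hu]
      congr 1
      ring
    · have e1 : idxF n H hH u = ⟨n - ZMod.val u, by omega⟩ := by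
        apply Fin.ext
        simp only [idxF_val]
        omega
      rw [e1]
      dsimp only
      have e2 : K + ((n - ZMod.val u : ℕ) : ZMod n) = m - v := by
        rw [Nat.cast_sub (le_of_lt htlt), hcu, ZMod.natCast_self, hmK, hu]
        ring
      rw [e2, hsym v]
  · intro g
    apply Subtype.ext
    funext i
    dsimp only
    have e0 : K + ((i : ℕ) : ZMod n) - K = ((i : ℕ) : ZMod n) := by ring
    rw [e0]
    have hv : ZMod.val ((i : ℕ) : ZMod n) = (i : ℕ) :=
      ZMod.val_natCast_of_lt (by omega)
    have e1 : idxF n H hH ((i : ℕ) : ZMod n) = i := by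
      apply Fin.ext
      simp only [idxF_val, hv]
      have := i.isLt
      omega
    rw [e1]

end refl


section assembly
variable (n l : ℕ)

lemma cyc_card_q' (d : ℕ) [NeZero d] :
    (Fintype.card {g : Fin d → Fin l // ∀ i, g i ≠ g (i+1)} : ℚ)
      = ((l:ℚ)-1)^d + (-1)^d * ((l:ℚ)-1) := by
  obtain ⟨k, rfl⟩ := Nat.exists_eq_succ_of_ne_zero (NeZero.ne d)
  exact cyc_card_q l k

lemma card_zmod_cyc_q (d : ℕ) [NeZero d] :
    ((Nat.card {f : ZMod d → Fin l // ∀ x : ZMod d, f x ≠ f (x + 1)}) : ℚ)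
      = ((l:ℚ)-1)^d + (-1)^d * ((l:ℚ)-1) := by
  rw [Nat.card_congr (properTransfer l d), Nat.card_eq_fintype_card, cyc_card_q']

variable [NeZero n]

lemma sum_rot :
    ∑ m : ZMod n, ((Nat.card (MulAction.fixedBy (Col n l) (DihedralGroup.r m))) : ℚ)
      = ∑ d ∈ n.divisors, (Nat.totient (n / d) : ℚ) * (((l:ℚ)-1)^d + (-1)^d * ((l:ℚ)-1)) := by
  have step1 : ∀ m : ZMod n,
      ((Nat.card (MulAction.fixedBy (Col n l) (DihedralGroup.r m))) : ℚ)
        = ((l:ℚ)-1)^(Nat.gcd n (ZMod.val m)) + (-1)^(Nat.gcd n (ZMod.val m)) * ((l:ℚ)-1) := by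
    intro m
    rw [card_fixed_r m]
    haveI : NeZero (Nat.gcd (ZMod.val m) n) := ⟨Nat.gcd_ne_zero_right (NeZero.ne n)⟩
    rw [card_zmod_cyc_q l _, Nat.gcd_comm]
  simp only [step1]
  have step2 : ∑ m : ZMod n,
      (((l:ℚ)-1)^(Nat.gcd n (ZMod.val m)) + (-1)^(Nat.gcd n (ZMod.val m)) * ((l:ℚ)-1))
      = ∑ j ∈ Finset.range n,
        (((l:ℚ)-1)^(Nat.gcd n j) + (-1)^(Nat.gcd n j) * ((l:ℚ)-1)) := by
    rw [← Fin.sum_univ_eq_sum_range (fun j => (((l:ℚ)-1)^(Nat.gcd n j) + (-1)^(Nat.gcd n j) * ((l:ℚ)-1))) n]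
    exact (Fintype.sum_equiv (zmodFinEquiv n) _ _ (fun i => by
      show _ = ((l:ℚ)-1)^(Nat.gcd n (ZMod.val (zmodFinEquiv n i))) + _
      rw [show ZMod.val (zmodFinEquiv n i) = (i : ℕ) from ZMod.val_natCast_of_lt i.isLt])).symm
  rw [step2]
  rw [← Finset.sum_fiberwise_of_maps_to (g := fun j => Nat.gcd n j) (t := n.divisors)
    (fun x _ => Nat.mem_divisors.mpr ⟨Nat.gcd_dvd_left _ _, NeZero.ne n⟩)]
  apply Finset.sum_congr rfl
  intro d hd
  have hcongr : ∀ j ∈ Finset.filter (fun j => Nat.gcd n j = d) (Finset.range n),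
      (((l:ℚ)-1)^(Nat.gcd n j) + (-1)^(Nat.gcd n j) * ((l:ℚ)-1))
        = (((l:ℚ)-1)^d + (-1)^d * ((l:ℚ)-1)) := by
    intro j hj
    rw [(Finset.mem_filter.mp hj).2]
  rw [Finset.sum_congr rfl hcongr, Finset.sum_const, nsmul_eq_mul]
  congr 2
  rw [Nat.totient_div_of_dvd (Nat.dvd_of_mem_divisors hd)]

lemma card_evens (hev : Even n) :
    (Finset.univ.filter (fun m : ZMod n => Even (ZMod.val m))).card = n / 2 := by
  rw [show n / 2 = (Finset.range (n/2)).card by rw [Finset.card_range]]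
  apply Finset.card_bij' (fun m _ => ZMod.val m / 2) (fun t _ => ((2*t : ℕ) : ZMod n))
  · intro m hm
    have h1 := (Finset.mem_filter.mp hm).2
    have h2 := m.val_lt
    rw [Nat.even_iff] at h1
    obtain ⟨H, hH⟩ := hev
    rw [Finset.mem_range]
    omega
  · intro t ht
    rw [Finset.mem_range] at ht
    obtain ⟨H, hH⟩ := hev
    rw [Finset.mem_filter]
    refine ⟨Finset.mem_univ _, ?_⟩
    rw [ZMod.val_natCast_of_lt (by omega)]
    exact ⟨t, by ring⟩
  · intro m hm
    have h1 := (Finset.mem_filter.mp hm).2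
    rw [Nat.even_iff] at h1
    have : 2 * (ZMod.val m / 2) = ZMod.val m := by omega
    rw [this]
    exact ZMod.natCast_rightInverse m
  · intro t ht
    rw [Finset.mem_range] at ht
    obtain ⟨H, hH⟩ := hev
    rw [ZMod.val_natCast_of_lt (by omega)]
    omega

lemma sum_refl (hn4 : 4 ≤ n) (hev : Even n) :
    ∑ m : ZMod n, ((Nat.card (MulAction.fixedBy (Col n l) (DihedralGroup.sr m))) : ℚ)
      = (n / 2 : ℕ) * ((l:ℚ) * ((l:ℚ)-1)^(n/2)) := by
  classical
  have step1 : ∀ m : ZMod n,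
      ((Nat.card (MulAction.fixedBy (Col n l) (DihedralGroup.sr m))) : ℚ)
        = if Even (ZMod.val m) then ((l:ℚ) * ((l:ℚ)-1)^(n/2)) else 0 := by
    intro m
    by_cases h : Even (ZMod.val m)
    · rw [if_pos h, card_fixed_sr_even hn4 hev m h, card_path']
    · rw [if_neg h, card_fixed_sr_odd m h, Nat.cast_zero]
  simp only [step1]
  rw [Finset.sum_ite, Finset.sum_const, Finset.sum_const_zero, add_zero, nsmul_eq_mul]
  congr 2
  exact card_evens n hev

end assembly


section final

lemma even_divisor_totient_sum (n : ℕ) (hev : Even n) (hn0 : n ≠ 0) :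
    ∑ d ∈ n.divisors.filter (fun d => Even d), Nat.totient (n / d) = n / 2 := by
  obtain ⟨M, hM⟩ := hev
  have hM0 : M ≠ 0 := by omega
  have h2 : n / 2 = M := by omega
  rw [h2]
  have hMtot : ∑ e ∈ M.divisors, Nat.totient (M / e) = M := by
    rw [Nat.sum_div_divisors, Nat.sum_totient]
  rw [← hMtot]
  refine Finset.sum_bij' (fun d _ => d / 2) (fun e _ => 2 * e) ?_ ?_ ?_ ?_ ?_
  · intro d hd
    rw [Finset.mem_filter, Nat.mem_divisors] at hd
    obtain ⟨⟨⟨c, hc⟩, -⟩, ⟨e, he⟩⟩ := hd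
    rw [Nat.mem_divisors]
    refine ⟨⟨c, ?_⟩, hM0⟩
    have hd2 : d / 2 = e := by omega
    rw [hd2]
    have h3 : d * c = 2 * (e * c) := by rw [show d = 2 * e by omega]; ring
    omega
  · intro e he
    rw [Nat.mem_divisors] at he
    obtain ⟨⟨c, hc⟩, -⟩ := he
    rw [Finset.mem_filter, Nat.mem_divisors]
    exact ⟨⟨⟨c, by rw [hM, hc]; ring⟩, hn0⟩, ⟨e, by ring⟩⟩
  · intro d hd
    rw [Finset.mem_filter] at hd
    obtain ⟨e, he⟩ := hd.2
    omega
  · intro e _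
    omega
  · intro d hd
    rw [Finset.mem_filter, Nat.mem_divisors] at hd
    obtain ⟨⟨hdvd, -⟩, ⟨e, he⟩⟩ := hd
    congr 1
    set q := d / 2 with hq
    have hdq : d = 2 * q := by omega
    rw [hM, show M + M = 2 * M by ring, hdq]
    exact Nat.mul_div_mul_left _ _ (by norm_num)

lemma alt_totient_sum (n : ℕ) (hn4 : 4 ≤ n) (hev : Even n) :
    ∑ d ∈ n.divisors, (Nat.totient (n / d) : ℚ) * (-1 : ℚ)^d = 0 := by
  classical
  have hn0 : n ≠ 0 := by omega
  rw [← Finset.sum_filter_add_sum_filter_not n.divisors (fun d => Even d)]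
  have h1 : ∀ d ∈ n.divisors.filter (fun d => Even d),
      (Nat.totient (n/d) : ℚ) * (-1 : ℚ)^d = (Nat.totient (n/d) : ℚ) := by
    intro d hd
    rw [Even.neg_one_pow (Finset.mem_filter.mp hd).2, mul_one]
  have h2 : ∀ d ∈ n.divisors.filter (fun d => ¬ Even d),
      (Nat.totient (n/d) : ℚ) * (-1 : ℚ)^d = -(Nat.totient (n/d) : ℚ) := by
    intro d hd
    rw [Odd.neg_one_pow (Nat.not_even_iff_odd.mp (Finset.mem_filter.mp hd).2), mul_neg_one]
  rw [Finset.sum_congr rfl h1, Finset.sum_congr rfl h2]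
  have htotq : ∑ d ∈ n.divisors.filter (fun d => Even d), (Nat.totient (n/d) : ℚ)
      + ∑ d ∈ n.divisors.filter (fun d => ¬ Even d), (Nat.totient (n/d) : ℚ) = (n : ℚ) := by
    rw [Finset.sum_filter_add_sum_filter_not]
    rw [show ∑ d ∈ n.divisors, (Nat.totient (n/d) : ℚ)
        = ((∑ d ∈ n.divisors, Nat.totient (n/d) : ℕ) : ℚ) by push_cast; rfl]
    rw [Nat.sum_div_divisors, Nat.sum_totient]
  have hevq : ∑ d ∈ n.divisors.filter (fun d => Even d), (Nat.totient (n/d) : ℚ)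
      = ((n / 2 : ℕ) : ℚ) := by
    rw [show ∑ d ∈ n.divisors.filter (fun d => Even d), (Nat.totient (n/d) : ℚ)
        = ((∑ d ∈ n.divisors.filter (fun d => Even d), Nat.totient (n/d) : ℕ) : ℚ) by
          push_cast; rfl]
    rw [even_divisor_totient_sum n hev hn0]
  obtain ⟨M, hM⟩ := hev
  have hM2 : n / 2 = M := by omega
  rw [hM2] at hevq
  have hncast : (n : ℚ) = 2 * (M : ℚ) := by rw [hM]; push_cast; ring
  rw [Finset.sum_neg_distrib]
  rw [hevq]
  rw [hevq, hncast] at htotq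
  linarith

def dihedralSumEquiv (n : ℕ) : (ZMod n ⊕ ZMod n) ≃ DihedralGroup n where
  toFun x := x.elim DihedralGroup.r DihedralGroup.sr
  invFun g := match g with
    | DihedralGroup.r m => Sum.inl m
    | DihedralGroup.sr m => Sum.inr m
  left_inv := by rintro (m | m) <;> rfl
  right_inv := by rintro (m | m) <;> rfl

end final


end Orbital11

open Orbital11 in
/-- For even `n ≥ 4`, the number of orbits of the dihedral group `D_n`
(generated by the rotations `v ↦ v + m` and the reflections `v ↦ m - v`) on
proper `l`-colorings of the cycle `Γ_n` equals
`(1/(2n)) ∑_{d ∣ n} φ(n/d) (l-1)^d + (1/4) l (l-1)^{n/2}`. -/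
theorem orbital_stmt11 (n l : ℕ) (hn : 4 ≤ n) (heven : Even n) :
    (Nat.card (Quot (fun f g : {f : ZMod n → Fin l // ∀ x : ZMod n, f x ≠ f (x + 1)} =>
        ∃ m : ZMod n, (∀ v : ZMod n, g.1 v = f.1 (v + m)) ∨
          (∀ v : ZMod n, g.1 v = f.1 (m - v)))) : ℚ) =
      (1 / (2 * (n : ℚ))) * ∑ d ∈ n.divisors, (Nat.totient (n / d) : ℚ) * ((l : ℚ) - 1) ^ d
        + (1 / 4) * (l : ℚ) * ((l : ℚ) - 1) ^ (n / 2) := by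
  classical
  haveI : NeZero n := ⟨by omega⟩
  -- identify the quotient with the orbit quotient
  have hquot : Nat.card (Quot (fun f g : Col n l =>
      ∃ m : ZMod n, (∀ v : ZMod n, g.1 v = f.1 (v + m)) ∨
        (∀ v : ZMod n, g.1 v = f.1 (m - v))))
      = Nat.card (Quotient (MulAction.orbitRel (DihedralGroup n) (Col n l))) := by
    apply Nat.card_congr
    exact Quot.congrRight (fun f g => (orbitRel_iff f g).symm)
  -- Burnside
  haveI : ∀ a : DihedralGroup n, Fintype (MulAction.fixedBy (Col n l) a) :=
    fun a => Fintype.ofFinite _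
  haveI : Fintype (Quotient (MulAction.orbitRel (DihedralGroup n) (Col n l))) :=
    Fintype.ofFinite _
  have hburn := MulAction.sum_card_fixedBy_eq_card_orbits_mul_card_group
    (DihedralGroup n) (Col n l)
  rw [DihedralGroup.card] at hburn
  have hsplit : ∑ a : DihedralGroup n, Fintype.card (MulAction.fixedBy (Col n l) a)
      = ∑ m : ZMod n, Fintype.card (MulAction.fixedBy (Col n l) (DihedralGroup.r m))
        + ∑ m : ZMod n, Fintype.card (MulAction.fixedBy (Col n l) (DihedralGroup.sr m)) := by
    rw [← (Fintype.sum_equiv (dihedralSumEquiv n)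
      (fun x => Fintype.card (MulAction.fixedBy (Col n l) ((dihedralSumEquiv n) x)))
      (fun a => Fintype.card (MulAction.fixedBy (Col n l) a)) (fun x => rfl))]
    rw [Fintype.sum_sum_type]
    rfl
  -- cast Burnside to ℚ
  have hburnq : (∑ m : ZMod n, ((Nat.card (MulAction.fixedBy (Col n l) (DihedralGroup.r m))) : ℚ))
      + (∑ m : ZMod n, ((Nat.card (MulAction.fixedBy (Col n l) (DihedralGroup.sr m))) : ℚ))
      = (Nat.card (Quotient (MulAction.orbitRel (DihedralGroup n) (Col n l))) : ℚ)
          * (2 * (n : ℚ)) := by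
    rw [hsplit] at hburn
    have hc := congrArg (Nat.cast : ℕ → ℚ) hburn
    push_cast at hc
    simp only [Nat.card_eq_fintype_card]
    linarith [hc]
  rw [hquot]
  rw [sum_rot, sum_refl n l hn heven] at hburnq
  -- final algebra
  obtain ⟨M, hM⟩ := heven
  have hM2 : n / 2 = M := by omega
  have hM0 : (M : ℚ) ≠ 0 := by
    have : M ≠ 0 := by omega
    exact_mod_cast this
  have hncast : (n : ℚ) = 2 * (M : ℚ) := by rw [hM]; push_cast; ring
  rw [hM2] at hburnq ⊢
  have hexp : ∑ d ∈ n.divisors, (Nat.totient (n / d) : ℚ) * (((l:ℚ)-1)^d + (-1)^d * ((l:ℚ)-1))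
      = ∑ d ∈ n.divisors, (Nat.totient (n / d) : ℚ) * ((l:ℚ)-1)^d
        + ((l:ℚ)-1) * ∑ d ∈ n.divisors, (Nat.totient (n / d) : ℚ) * (-1:ℚ)^d := by
    rw [Finset.mul_sum, ← Finset.sum_add_distrib]
    apply Finset.sum_congr rfl
    intro d _
    ring
  rw [hexp, alt_totient_sum n hn ⟨M, hM⟩, mul_zero, add_zero] at hburnq
  have h2n : (2 * (n:ℚ)) ≠ 0 := by
    rw [hncast]; intro h; exact hM0 (by linarith)
  have hQ : (Nat.card (Quotient (MulAction.orbitRel (DihedralGroup n) (Col n l))) : ℚ)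
      = (∑ d ∈ n.divisors, (Nat.totient (n / d) : ℚ) * ((l:ℚ)-1)^d
          + (M:ℚ) * ((l:ℚ) * ((l:ℚ)-1)^M)) / (2*(n:ℚ)) := by
    rw [eq_div_iff h2n]
    linarith [hburnq]
  rw [hQ, hncast]
  field_simp
  ring
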